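/- For every x with 0.301 < x < π/2, one has tan x < x·(8 + b(x))/(π² − 4x²) where b(x) = (8/π)(π/2 − x) + (16/π² − 8/3)(π/2 − x)² + (32/π³ − 8/(3π))(π/2 − x)³; in particular (π² − 4x²)·tan x is bounded above by x·(8 + b(x)). -/

import Mathlib

open Real

/-- If `f 0 = 0` and `f` has nonnegative derivative on `[0,∞)`, then `f t ≥ 0` for `t ≥ 0`. -/
lemma my_nonneg_of_deriv (f f' : ℝ → ℝ) (hf : ∀ t, HasDerivAt f (f' t) t)
    (h0 : f 0 = 0) (hd : ∀ t, 0 ≤ t → 0 ≤ f' t) : ∀ t, 0 ≤ t → 0 ≤ f t := by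
  intro t ht
  have hmono : MonotoneOn f (Set.Ici (0:ℝ)) := by
    apply monotoneOn_of_deriv_nonneg (convex_Ici 0)
    · exact fun s _ => ((hf s).differentiableAt).continuousAt.continuousWithinAt
    · exact fun s _ => ((hf s).differentiableAt).differentiableWithinAt
    · intro s hs
      rw [(hf s).deriv]
      exact hd s (le_of_lt (by simpa using hs))
  have := hmono (Set.mem_Ici.mpr le_rfl) (by exact ht) ht
  linarith [this]

lemma my_sin_le (t : ℝ) (ht : 0 ≤ t) : Real.sin t ≤ t := by
  rcases eq_or_lt_of_le ht with h | h
  · simp [← h]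
  · exact le_of_lt (Real.sin_lt h)

lemma my_cos_ge (t : ℝ) (ht : 0 ≤ t) : 1 - t^2/2 ≤ Real.cos t := by
  have := my_nonneg_of_deriv (fun t => Real.cos t - (1 - t^2/2)) (fun t => t - Real.sin t)
    (fun t => by
      have h1 := (Real.hasDerivAt_cos t).sub
        ((hasDerivAt_const t (1:ℝ)).sub (((hasDerivAt_id t).pow 2).div_const 2))
      exact h1.congr_deriv (by simp; ring))
    (by norm_num) (fun s hs => by linarith [my_sin_le s hs]) t ht
  linarith

lemma my_sin_ge (t : ℝ) (ht : 0 ≤ t) : t - t^3/6 ≤ Real.sin t := by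
  have := my_nonneg_of_deriv (fun t => Real.sin t - (t - t^3/6)) (fun t => Real.cos t - (1 - t^2/2))
    (fun t => by
      have h1 := (Real.hasDerivAt_sin t).sub
        ((hasDerivAt_id t).sub (((hasDerivAt_id t).pow 3).div_const 6))
      exact h1.congr_deriv (by simp; ring))
    (by norm_num) (fun s hs => by linarith [my_cos_ge s hs]) t ht
  linarith

lemma my_cos_le (t : ℝ) (ht : 0 ≤ t) : Real.cos t ≤ 1 - t^2/2 + t^4/24 := by
  have := my_nonneg_of_deriv (fun t => (1 - t^2/2 + t^4/24) - Real.cos t)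
    (fun t => Real.sin t - (t - t^3/6))
    (fun t => by
      have h1 := (((hasDerivAt_const t (1:ℝ)).sub (((hasDerivAt_id t).pow 2).div_const 2)).add
        (((hasDerivAt_id t).pow 4).div_const 24)).sub (Real.hasDerivAt_cos t)
      exact h1.congr_deriv (by simp; ring))
    (by norm_num) (fun s hs => by linarith [my_sin_ge s hs]) t ht
  linarith

lemma my_sin_le2 (t : ℝ) (ht : 0 ≤ t) : Real.sin t ≤ t - t^3/6 + t^5/120 := by
  have := my_nonneg_of_deriv (fun t => (t - t^3/6 + t^5/120) - Real.sin t)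
    (fun t => (1 - t^2/2 + t^4/24) - Real.cos t)
    (fun t => by
      have h1 := (((hasDerivAt_id t).sub (((hasDerivAt_id t).pow 3).div_const 6)).add
        (((hasDerivAt_id t).pow 5).div_const 120)).sub (Real.hasDerivAt_sin t)
      exact h1.congr_deriv (by simp; ring))
    (by norm_num) (fun s hs => by linarith [my_cos_le s hs]) t ht
  linarith

lemma my_cos_ge2 (t : ℝ) (ht : 0 ≤ t) : 1 - t^2/2 + t^4/24 - t^6/720 ≤ Real.cos t := by
  have := my_nonneg_of_deriv (fun t => Real.cos t - (1 - t^2/2 + t^4/24 - t^6/720))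
    (fun t => (t - t^3/6 + t^5/120) - Real.sin t)
    (fun t => by
      have h1 := (Real.hasDerivAt_cos t).sub ((((hasDerivAt_const t (1:ℝ)).sub
        (((hasDerivAt_id t).pow 2).div_const 2)).add
        (((hasDerivAt_id t).pow 4).div_const 24)).sub (((hasDerivAt_id t).pow 6).div_const 720))
      exact h1.congr_deriv (by simp; ring))
    (by norm_num) (fun s hs => by linarith [my_sin_le2 s hs]) t ht
  linarith

lemma my_sin_ge2 (t : ℝ) (ht : 0 ≤ t) : t - t^3/6 + t^5/120 - t^7/5040 ≤ Real.sin t := by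
  have := my_nonneg_of_deriv (fun t => Real.sin t - (t - t^3/6 + t^5/120 - t^7/5040))
    (fun t => Real.cos t - (1 - t^2/2 + t^4/24 - t^6/720))
    (fun t => by
      have h1 := (Real.hasDerivAt_sin t).sub ((((hasDerivAt_id t).sub
        (((hasDerivAt_id t).pow 3).div_const 6)).add
        (((hasDerivAt_id t).pow 5).div_const 120)).sub (((hasDerivAt_id t).pow 7).div_const 5040))
      exact h1.congr_deriv (by simp; ring))
    (by norm_num) (fun s hs => by linarith [my_cos_ge2 s hs]) t ht
  linarith

lemma my_cos_le2 (t : ℝ) (ht : 0 ≤ t) :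
    Real.cos t ≤ 1 - t^2/2 + t^4/24 - t^6/720 + t^8/40320 := by
  have := my_nonneg_of_deriv
    (fun t => (1 - t^2/2 + t^4/24 - t^6/720 + t^8/40320) - Real.cos t)
    (fun t => Real.sin t - (t - t^3/6 + t^5/120 - t^7/5040))
    (fun t => by
      have h1 := (((((hasDerivAt_const t (1:ℝ)).sub
        (((hasDerivAt_id t).pow 2).div_const 2)).add
        (((hasDerivAt_id t).pow 4).div_const 24)).sub
        (((hasDerivAt_id t).pow 6).div_const 720)).add
        (((hasDerivAt_id t).pow 8).div_const 40320)).sub (Real.hasDerivAt_cos t)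
      exact h1.congr_deriv (by simp; ring))
    (by norm_num) (fun s hs => by linarith [my_sin_ge2 s hs]) t ht
  linarith

set_option maxHeartbeats 1000000 in
theorem stmt17 (x : ℝ) (h0 : 0.301 < x) (h1 : x < π / 2) :
    Real.tan x < x * (8 + ((8 / π) * (π / 2 - x) + (16 / π ^ 2 - 8 / 3) * (π / 2 - x) ^ 2 +
      (32 / π ^ 3 - 8 / (3 * π)) * (π / 2 - x) ^ 3)) / (π ^ 2 - 4 * x ^ 2) ∧
    (π ^ 2 - 4 * x ^ 2) * Real.tan x ≤
      x * (8 + ((8 / π) * (π / 2 - x) + (16 / π ^ 2 - 8 / 3) * (π / 2 - x) ^ 2 +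
        (32 / π ^ 3 - 8 / (3 * π)) * (π / 2 - x) ^ 3)) := by
  have hπl := Real.pi_gt_d6
  have hπu := Real.pi_lt_d2
  have hπu' := Real.pi_lt_d6
  have hπ0 : (0:ℝ) < π := Real.pi_pos
  set t : ℝ := π / 2 - x with htdef
  have ht0 : 0 < t := by rw [htdef]; linarith
  have ht127 : t < 1.27 := by rw [htdef]; linarith
  have ht2 : t^2 < 1.6129 := by nlinarith
  have ht4 : t^4 < 2.602 := by nlinarith
  have ht6 : t^6 < 4.2 := by nlinarith
  have hxt : x = π / 2 - t := by rw [htdef]; ring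
  clear_value t
  have hsinpos : 0 < Real.sin t := Real.sin_pos_of_pos_of_lt_pi ht0 (by linarith)
  -- Q polynomial
  have hQpos : 0 < 1 - t^2/3 - t^4/45 - 2*t^6/945 := by linarith
  -- step 1 : t * cos t < sin t * Q
  have hsl : t - t^3/6 + t^5/120 - t^7/5040 ≤ Real.sin t := my_sin_ge2 t ht0.le
  have hcu : Real.cos t ≤ 1 - t^2/2 + t^4/24 - t^6/720 + t^8/40320 := my_cos_le2 t ht0.le
  have hin : 0 < 1 - t^2/6 + t^4/120 - t^6/5040 := by nlinarith [pow_pos ht0 4]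
  have hslpos : 0 < t - t^3/6 + t^5/120 - t^7/5040 := by nlinarith [mul_pos ht0 hin]
  have hpoly : t * (1 - t^2/2 + t^4/24 - t^6/720 + t^8/40320)
      < (t - t^3/6 + t^5/120 - t^7/5040) * (1 - t^2/3 - t^4/45 - 2*t^6/945) := by
    have hfact : (t - t^3/6 + t^5/120 - t^7/5040) * (1 - t^2/3 - t^4/45 - 2*t^6/945)
        - t * (1 - t^2/2 + t^4/24 - t^6/720 + t^8/40320)
        = t^9 * (379 - 24*t^2 + (16/21)*t^4) / 1814400 := by ring
    rw [← sub_pos, hfact]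
    apply div_pos _ (by norm_num)
    apply mul_pos (pow_pos ht0 9)
    nlinarith [pow_pos ht0 4]
  have h1 : t * Real.cos t < Real.sin t * (1 - t^2/3 - t^4/45 - 2*t^6/945) := by
    calc t * Real.cos t ≤ t * (1 - t^2/2 + t^4/24 - t^6/720 + t^8/40320) :=
          mul_le_mul_of_nonneg_left hcu ht0.le
      _ < (t - t^3/6 + t^5/120 - t^7/5040) * (1 - t^2/3 - t^4/45 - 2*t^6/945) := hpoly
      _ ≤ Real.sin t * (1 - t^2/3 - t^4/45 - 2*t^6/945) :=
          mul_le_mul_of_nonneg_right hsl hQpos.le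
  -- step 2 : 4(π-t) Q ≤ (π/2-t)(8+b)
  have h2 : 4*(π - t) * (1 - t^2/3 - t^4/45 - 2*t^6/945)
      ≤ (π/2 - t) * (8 + ((8 / π) * t + (16 / π ^ 2 - 8 / 3) * t ^ 2 +
        (32 / π ^ 3 - 8 / (3 * π)) * t ^ 3)) := by
    rw [← sub_nonneg]
    have hident : (π/2 - t) * (8 + ((8 / π) * t + (16 / π ^ 2 - 8 / 3) * t ^ 2 +
        (32 / π ^ 3 - 8 / (3 * π)) * t ^ 3)) - 4*(π - t) * (1 - t^2/3 - t^4/45 - 2*t^6/945)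
        = t^4 * ((8/(3*π) - 32/π^3 + 4*π/45) - (4/45)*t + (8*π/945)*t^2 - (8/945)*t^3) := by
      field_simp
      ring
    rw [hident]
    apply mul_nonneg (by positivity)
    have hA : (0.0960:ℝ) ≤ 8/(3*π) - 32/π^3 + 4*π/45 := by
      have h3 : (0.8488:ℝ) ≤ 8/(3*π) := by
        rw [le_div_iff₀ (by linarith)]; nlinarith
      have h4 : 32/π^3 ≤ 1.03205 := by
        rw [div_le_iff₀ (by positivity)]; nlinarith
      have h5 : (0.27925:ℝ) ≤ 4*π/45 := by linarith
      linarith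
    have hB : (4/45)*t - (8*π/945)*t^2 + (8/945)*t^3 ≤ 0.0874 := by
      nlinarith [sq_nonneg t, sq_nonneg (t - 1.27), mul_pos ht0 ht0,
        mul_nonneg (mul_nonneg ht0.le ht0.le) ht0.le]
    linarith
  have hDpos : 0 < π ^ 2 - 4 * x ^ 2 := by nlinarith
  have hD : π ^ 2 - 4 * x ^ 2 = 4 * t * (π - t) := by rw [hxt]; ring
  have htan : Real.tan x = Real.cos t / Real.sin t := by
    rw [Real.tan_eq_sin_div_cos, hxt, Real.sin_pi_div_two_sub, Real.cos_pi_div_two_sub]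
  have e1 := mul_lt_mul_of_pos_left h1 (show (0:ℝ) < 4*(π-t) by linarith)
  have e2 := mul_le_mul_of_nonneg_right h2 hsinpos.le
  constructor
  · rw [htan, div_lt_div_iff₀ hsinpos hDpos, hD, hxt]
    nlinarith [e1, e2]
  · rw [htan, hD, hxt, ← mul_div_assoc, div_le_iff₀ hsinpos]
    nlinarith [e1, e2]
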